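/- Let G be an overlap graph of a family of sets. If every clean induced subgraph H of G with ω(H) ≤ j satisfies χ(H) ≤ α_j for all 2 ≤ j ≤ ω(G), then χ(G) ≤ ∏_{j=2}^{ω(G)} 2α_j. -/

import Mathlib

set_option linter.unusedSectionVars false


/-- Two sets *overlap* if they intersect but neither contains the other. -/
def SetsOverlap {α : Type*} (s t : Set α) : Prop :=
  (s ∩ t).Nonempty ∧ ¬ s ⊆ t ∧ ¬ t ⊆ s

/-- The restriction of the overlap model `μ` to `W` is *clean*: there are no three
vertices `x, y, z` in `W` with `μ x` and `μ y` overlapping and `μ z ⊆ μ x ∩ μ y`. -/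
def CleanOn {V α : Type*} (μ : V → Set α) (W : Set V) : Prop :=
  ¬ ∃ x ∈ W, ∃ y ∈ W, ∃ z ∈ W, SetsOverlap (μ x) (μ y) ∧ μ z ⊆ μ x ∩ μ y

namespace OverlapClean

open SimpleGraph Finset

attribute [local instance] Classical.propDecidable

variable {V α : Type*}

/-- transfer colorability along a homomorphism -/
lemma colorable_of_hom {W : Type*} {G : SimpleGraph V} {H : SimpleGraph W}
    (f : G →g H) {n : ℕ} (h : H.Colorable n) : G.Colorable n := by
  obtain ⟨c⟩ := h
  exact ⟨c.comp f⟩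

lemma le_cliqueNum_of_isNClique [Fintype V] {G : SimpleGraph V} {n : ℕ} {s : Finset V}
    (h : G.IsNClique n s) : n ≤ G.cliqueNum := by
  have := SimpleGraph.IsClique.card_le_cliqueNum (G := G) (t := s) (tc := h.isClique)
  rwa [h.card_eq] at this

lemma cliqueNum_le_of_forall [Fintype V] {G : SimpleGraph V} {k : ℕ}
    (h : ∀ s : Finset V, ¬ G.IsNClique (k + 1) s) : G.cliqueNum ≤ k := by
  by_contra hlt
  push_neg at hlt
  obtain ⟨s, hs⟩ := G.exists_isNClique_cliqueNum
  have hcard : k + 1 ≤ s.card := by rw [hs.card_eq]; omega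
  obtain ⟨t, hts, htc⟩ := Finset.exists_subset_card_eq hcard
  exact h t ⟨hs.isClique.subset (by exact_mod_cast hts), htc⟩

lemma isNClique_map_of_embedding {W : Type*} {G : SimpleGraph V} {H : SimpleGraph W}
    (f : G ↪g H) {n : ℕ} {s : Finset V} (h : G.IsNClique n s) :
    H.IsNClique n (s.map f.toEmbedding) := by
  constructor
  · rw [Finset.coe_map]
    intro a ha b hb hne
    obtain ⟨a', ha', rfl⟩ := ha
    obtain ⟨b', hb', rfl⟩ := hb
    exact f.map_adj_iff.2 (h.isClique ha' hb' (fun hc => hne (by rw [hc])))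
  · rw [Finset.card_map, h.card_eq]

lemma cliqueNum_le_of_embedding {W : Type*} [Fintype V] [Fintype W]
    {G : SimpleGraph V} {H : SimpleGraph W} (f : G ↪g H) : G.cliqueNum ≤ H.cliqueNum := by
  obtain ⟨s, hs⟩ := G.exists_isNClique_cliqueNum
  exact le_cliqueNum_of_isNClique (isNClique_map_of_embedding f hs)

section Construction

variable {V α : Type*} [Fintype V] (G : SimpleGraph V) (μ : V → Set α) (k : ℕ)

/-- vertices that are the unique remaining (in `U`) vertex of some `k`-clique -/
def Sset (U : Set V) : Set V :=
  {v | v ∈ U ∧ ∃ t : Finset V, G.IsNClique k t ∧ v ∈ t ∧ ∀ u ∈ t, u ≠ v → u ∉ U}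

/-- the next layer to extract from the remaining set `U` -/
noncomputable def layerOf (U : Set V) : Set V :=
  if (Sset G k U).Nonempty then Sset G k U
  else if h : U.Nonempty then
    {Classical.choose (Set.Finite.exists_maximalFor μ U U.toFinite h)}
  else ∅

lemma Sset_subset (U : Set V) : Sset G k U ⊆ U := fun _ h => h.1

lemma layerOf_subset (U : Set V) : layerOf G μ k U ⊆ U := by
  unfold layerOf
  split_ifs with h1 h2
  · exact Sset_subset G k U
  · intro v hv
    rw [Set.mem_singleton_iff] at hv
    subst hv
    exact (Classical.choose_spec (Set.Finite.exists_maximalFor μ U U.toFinite h2)).1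
  · simp

lemma layerOf_nonempty {U : Set V} (h : U.Nonempty) : (layerOf G μ k U).Nonempty := by
  unfold layerOf
  split_ifs with h1
  · exact h1
  · exact Set.singleton_nonempty _

/-- the sequence of remaining vertex sets -/
noncomputable def Vseq : ℕ → Set V
  | 0 => Set.univ
  | (e + 1) => Vseq e \ layerOf G μ k (Vseq e)

/-- The `e`-th layer. -/
noncomputable def layer (e : ℕ) : Set V := layerOf G μ k (Vseq G μ k e)

lemma Vseq_succ_subset (e : ℕ) : Vseq G μ k (e + 1) ⊆ Vseq G μ k e :=
  Set.diff_subset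

lemma Vseq_antitone : Antitone (Vseq G μ k) :=
  antitone_nat_of_succ_le (fun e => Vseq_succ_subset G μ k e)

lemma Vseq_ncard (e : ℕ) (h : (Vseq G μ k e).Nonempty) :
    (Vseq G μ k e).ncard + e ≤ Fintype.card V := by
  induction e with
  | zero => simp [Vseq, Set.ncard_univ, Nat.card_eq_fintype_card]
  | succ e ih =>
    have hsub : Vseq G μ k (e+1) ⊆ Vseq G μ k e := Vseq_succ_subset G μ k e
    have he : (Vseq G μ k e).Nonempty := h.mono hsub
    have hlt : (Vseq G μ k (e+1)).ncard < (Vseq G μ k e).ncard := by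
      apply Set.ncard_lt_ncard _ (Set.toFinite _)
      constructor
      · exact hsub
      · intro hle
        obtain ⟨v, hv⟩ := layerOf_nonempty G μ k (U := Vseq G μ k e) he
        have hvU : v ∈ Vseq G μ k e := layerOf_subset G μ k _ hv
        have : v ∈ Vseq G μ k (e+1) := hle hvU
        exact this.2 hv
    have := ih he
    omega

lemma exists_not_mem_Vseq (v : V) : ∃ e, v ∉ Vseq G μ k (e + 1) := by
  refine ⟨Fintype.card V, fun hv => ?_⟩
  have := Vseq_ncard G μ k (Fintype.card V + 1) ⟨v, hv⟩
  have : 0 < (Vseq G μ k (Fintype.card V + 1)).ncard := (Set.ncard_pos (Set.toFinite _)).2 ⟨v, hv⟩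
  omega

/-- layer index of a vertex -/
noncomputable def lay (v : V) : ℕ := Nat.find (exists_not_mem_Vseq G μ k v)

lemma not_mem_Vseq_lay_succ (v : V) : v ∉ Vseq G μ k (lay G μ k v + 1) :=
  Nat.find_spec (exists_not_mem_Vseq G μ k v)

lemma mem_Vseq_iff {v : V} {e : ℕ} : v ∈ Vseq G μ k e ↔ e ≤ lay G μ k v := by
  constructor
  · intro hv
    by_contra hle
    push_neg at hle
    exact not_mem_Vseq_lay_succ G μ k v
      (Vseq_antitone G μ k (show lay G μ k v + 1 ≤ e by omega) hv)
  · intro hle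
    match e, hle with
    | 0, _ => exact Set.mem_univ v
    | (e+1), hle =>
      by_contra hv
      have hlt : e < lay G μ k v := by omega
      exact (Nat.find_min (exists_not_mem_Vseq G μ k v) hlt) hv

lemma mem_layer_lay (v : V) : v ∈ layer G μ k (lay G μ k v) := by
  have h1 : v ∈ Vseq G μ k (lay G μ k v) := (mem_Vseq_iff G μ k).2 le_rfl
  have h2 := not_mem_Vseq_lay_succ G μ k v
  simp only [Vseq, Set.mem_diff] at h2
  push_neg at h2
  exact h2 h1

lemma lay_eq_of_mem_layer {v : V} {e : ℕ} (h : v ∈ layer G μ k e) : lay G μ k v = e := by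
  have h1 : v ∈ Vseq G μ k e := layerOf_subset G μ k _ h
  have h2 : v ∉ Vseq G μ k (e + 1) := by
    simp only [Vseq, Set.mem_diff]
    intro hc
    exact hc.2 h
  rw [mem_Vseq_iff] at h1
  have := not_mem_Vseq_lay_succ G μ k v
  by_contra hne
  have : e + 1 ≤ lay G μ k v := by omega
  exact h2 ((mem_Vseq_iff G μ k).2 this)


section KeyLemmas

variable (hmodel : ∀ u v : V, G.Adj u v ↔ SetsOverlap (μ u) (μ v))

include hmodel

/-- Once a vertex is removed, no vertex removed strictly later has a set properly
containing its set. -/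
lemma no_containment (hk : 1 ≤ k) :
    ∀ e z x, lay G μ k z = e → e < lay G μ k x → ¬ (μ z ⊂ μ x) := by
  intro e
  induction e using Nat.strong_induction_on with
  | _ e IH =>
  intro z x hze hex hsub
  have hzL : z ∈ layer G μ k (lay G μ k z) := mem_layer_lay G μ k z
  rw [hze] at hzL
  have hxU : x ∈ Vseq G μ k e := (mem_Vseq_iff G μ k).2 (by omega)
  by_cases hS : (Sset G k (Vseq G μ k e)).Nonempty
  · unfold layer layerOf at hzL
    rw [if_pos hS] at hzL
    obtain ⟨hzU, t, ht, hzt, hrest⟩ := hzL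
    have hadj : ∀ w ∈ t.erase z, G.Adj x w := by
      intro w hw
      have hwz : w ≠ z := Finset.ne_of_mem_erase hw
      have hwt : w ∈ t := Finset.mem_of_mem_erase hw
      have hadjwz : G.Adj w z :=
        ht.isClique (Finset.mem_coe.2 hwt) (Finset.mem_coe.2 hzt) hwz
      obtain ⟨⟨p, hp⟩, hwsub, hzsub⟩ := (hmodel w z).1 hadjwz
      have hlayw : lay G μ k w < e := by
        have := hrest w hwt hwz
        rw [mem_Vseq_iff] at this
        omega
      refine (hmodel x w).2 ⟨⟨p, ⟨hsub.subset hp.2, hp.1⟩⟩, ?_, ?_⟩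
      · intro hxw
        exact hzsub (hsub.subset.trans hxw)
      · intro hwx
        rcases hwx.ssubset_or_eq with h | h
        · exact IH (lay G μ k w) hlayw w x rfl (by omega) h
        · rw [h] at hzsub
          exact hzsub hsub.subset
    have hxS : x ∈ Sset G k (Vseq G μ k e) := by
      refine ⟨hxU, insert x (t.erase z), ?_, Finset.mem_insert_self _ _, ?_⟩
      · have h1 : G.IsNClique (k - 1) (t.erase z) :=
          ⟨ht.isClique.subset (by exact_mod_cast Finset.erase_subset _ _),
            by rw [Finset.card_erase_of_mem hzt, ht.card_eq]⟩
        have h2 := h1.insert hadj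
        have hkk : k - 1 + 1 = k := by omega
        rwa [hkk] at h2
      · intro u hu hux
        rcases Finset.mem_insert.1 hu with h | h
        · exact absurd h hux
        · exact hrest u (Finset.mem_of_mem_erase h) (Finset.ne_of_mem_erase h)
    have : lay G μ k x = e := by
      apply lay_eq_of_mem_layer
      unfold layer layerOf
      rw [if_pos hS]
      exact hxS
    omega
  · unfold layer layerOf at hzL
    rw [if_neg hS] at hzL
    have hUne : (Vseq G μ k e).Nonempty := ⟨x, hxU⟩
    rw [dif_pos hUne] at hzL
    rw [Set.mem_singleton_iff] at hzL
    obtain ⟨hmem, hmax⟩ :=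
      Classical.choose_spec (Set.Finite.exists_maximalFor μ _ (Set.toFinite _) hUne)
    rw [← hzL] at hmax
    exact not_subset_of_ssubset hsub (hmax hxU hsub.subset)

/-- Each layer is clean. -/
lemma cleanOn_layer (hk : 2 ≤ k) (hno : ∀ s : Finset V, ¬ G.IsNClique (k + 1) s) (e : ℕ) :
    CleanOn μ (layer G μ k e) := by
  rintro ⟨x, hx, y, hy, z, hz, hov, hsub⟩
  by_cases hS : (Sset G k (Vseq G μ k e)).Nonempty
  · unfold layer layerOf at hx hy hz
    rw [if_pos hS] at hx hy hz
    obtain ⟨hzU, t, ht, hzt, hrest⟩ := hz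
    have hxU : x ∈ Vseq G μ k e := hx.1
    have hyU : y ∈ Vseq G μ k e := hy.1
    have hlayx : e ≤ lay G μ k x := (mem_Vseq_iff G μ k).1 hxU
    have hlayy : e ≤ lay G μ k y := (mem_Vseq_iff G μ k).1 hyU
    have hzx : μ z ⊂ μ x := by
      refine ⟨fun a ha => (hsub ha).1, fun hle => hov.2.1 fun a ha => ?_⟩
      exact (hsub (hle ha)).2
    have hzy : μ z ⊂ μ y := by
      refine ⟨fun a ha => (hsub ha).2, fun hle => hov.2.2 fun a ha => ?_⟩
      exact (hsub (hle ha)).1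
    have key : ∀ x' : V, e ≤ lay G μ k x' → μ z ⊂ μ x' → ∀ w ∈ t.erase z, G.Adj x' w := by
      intro x' hlx' hsub' w hw
      have hwz : w ≠ z := Finset.ne_of_mem_erase hw
      have hwt : w ∈ t := Finset.mem_of_mem_erase hw
      have hadjwz : G.Adj w z :=
        ht.isClique (Finset.mem_coe.2 hwt) (Finset.mem_coe.2 hzt) hwz
      obtain ⟨⟨p, hp⟩, hwsub, hzsub⟩ := (hmodel w z).1 hadjwz
      have hlayw : lay G μ k w < e := by
        have := hrest w hwt hwz
        rw [mem_Vseq_iff] at this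
        omega
      refine (hmodel x' w).2 ⟨⟨p, ⟨hsub'.subset hp.2, hp.1⟩⟩, ?_, ?_⟩
      · intro hxw
        exact hzsub (hsub'.subset.trans hxw)
      · intro hwx
        rcases hwx.ssubset_or_eq with h | h
        · exact no_containment G μ k hmodel (by omega) (lay G μ k w) w x' rfl (by omega) h
        · rw [h] at hzsub
          exact hzsub hsub'.subset
    have h1 : G.IsNClique (k - 1) (t.erase z) :=
      ⟨ht.isClique.subset (by exact_mod_cast Finset.erase_subset _ _),
        by rw [Finset.card_erase_of_mem hzt, ht.card_eq]⟩
    have h2 : G.IsNClique (k - 1 + 1) (insert y (t.erase z)) := h1.insert (key y hlayy hzy)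
    have h3 : G.IsNClique (k - 1 + 1 + 1) (insert x (insert y (t.erase z))) := by
      refine h2.insert ?_
      intro b hb
      rcases Finset.mem_insert.1 hb with h | h
      · rw [h]
        exact (hmodel x y).2 hov
      · exact key x hlayx hzx b h
    have hkk : k - 1 + 1 + 1 = k + 1 := by omega
    rw [hkk] at h3
    exact hno _ h3
  · unfold layer layerOf at hx hy
    rw [if_neg hS] at hx hy
    by_cases hUne : (Vseq G μ k e).Nonempty
    · rw [dif_pos hUne, Set.mem_singleton_iff] at hx hy
      rw [hx, ← hy] at hov
      exact hov.2.1 le_rfl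
    · rw [dif_neg hUne] at hx
      exact hx

/-- Every `k`-clique contains two vertices whose layers differ by at most one. -/
lemma clique_two_layers (hk : 2 ≤ k) {t : Finset V} (ht : G.IsNClique k t) :
    ∃ u ∈ t, ∃ v ∈ t, u ≠ v ∧ lay G μ k u ≤ lay G μ k v ∧
      lay G μ k v ≤ lay G μ k u + 1 := by
  have htne : t.Nonempty := by
    rw [← Finset.card_pos, ht.card_eq]; omega
  obtain ⟨v, hvt, hvmax⟩ := Finset.exists_max_image t (lay G μ k) htne
  by_cases hex : ∃ u ∈ t, u ≠ v ∧ lay G μ k v ≤ lay G μ k u + 1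
  · obtain ⟨u, hut, huv, hle⟩ := hex
    exact ⟨u, hut, v, hvt, huv, hvmax u hut, hle⟩
  · push_neg at hex
    obtain ⟨u0, hu0t, hu0v⟩ := Finset.exists_mem_ne (by rw [ht.card_eq]; omega) v
    have h1 : 1 ≤ lay G μ k v := by have := hex u0 hu0t hu0v; omega
    have hvS : v ∈ Sset G k (Vseq G μ k (lay G μ k v - 1)) := by
      refine ⟨(mem_Vseq_iff G μ k).2 (by omega), t, ht, hvt, ?_⟩
      intro u hut huv
      have := hex u hut huv
      rw [mem_Vseq_iff]
      omega
    have : lay G μ k v = lay G μ k v - 1 := by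
      apply lay_eq_of_mem_layer
      unfold layer layerOf
      rw [if_pos ⟨v, hvS⟩]
      exact hvS
    omega

/-- Assembly: partition into layers, 2 parities × clean colors, recurse on classes. -/
lemma aux (hk : 2 ≤ k) (hno : ∀ s : Finset V, ¬ G.IsNClique (k + 1) s)
    (B C : ℕ)
    (hB : ∀ L : Set V, CleanOn μ L → (G.induce L).Colorable B)
    (hC : ∀ U : Set V, (∀ s : Finset ↥U, ¬ (G.induce U).IsNClique k s) →
      (G.induce U).Colorable C) :
    G.Colorable (2 * B * C) := by
  classical
  have ce : ∀ e : ℕ, (G.induce (layer G μ k e)).Coloring (Fin B) := fun e =>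
    (hB _ (cleanOn_layer G μ k hmodel hk hno e)).some
  set cB : V → Fin B := fun v => ce (lay G μ k v) ⟨v, mem_layer_lay G μ k v⟩ with hcB
  set key : V → Fin 2 × Fin B := fun v => (⟨lay G μ k v % 2, by omega⟩, cB v) with hkeydef
  set Ukey : Fin 2 × Fin B → Set V := fun p => {v | key v = p} with hUdef
  have stepc : ∀ (w : V) (e : ℕ) (h : lay G μ k w = e),
      ce e ⟨w, h ▸ mem_layer_lay G μ k w⟩ = cB w := by
    intro w e h
    cases h
    rfl
  have hUno : ∀ p, ∀ s : Finset ↥(Ukey p), ¬ (G.induce (Ukey p)).IsNClique k s := by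
    intro p s hs
    have ht : G.IsNClique k
        (s.map (SimpleGraph.Embedding.induce (Ukey p)).toEmbedding) :=
      isNClique_map_of_embedding _ hs
    obtain ⟨u, hut, v, hvt, huv, h1, h2⟩ := clique_two_layers G μ k hmodel hk ht
    have hu : key u = p := by
      obtain ⟨u', hu', rfl⟩ := Finset.mem_map.1 hut
      exact u'.2
    have hv : key v = p := by
      obtain ⟨v', hv', rfl⟩ := Finset.mem_map.1 hvt
      exact v'.2
    have hkey : key u = key v := by rw [hu, hv]
    have hpar : lay G μ k u % 2 = lay G μ k v % 2 :=
      congrArg (fun q => (Prod.fst q).val) hkey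
    have hcol : cB u = cB v := congrArg Prod.snd hkey
    have hlayeq : lay G μ k v = lay G μ k u := by omega
    have hadjuv : G.Adj u v :=
      ht.isClique (Finset.mem_coe.2 hut) (Finset.mem_coe.2 hvt) huv
    have hv2 : v ∈ layer G μ k (lay G μ k u) := hlayeq ▸ mem_layer_lay G μ k v
    have hadj' : (G.induce (layer G μ k (lay G μ k u))).Adj
        ⟨u, mem_layer_lay G μ k u⟩ ⟨v, hv2⟩ := hadjuv
    apply (ce (lay G μ k u)).valid hadj'
    show ce (lay G μ k u) ⟨u, mem_layer_lay G μ k u⟩ = ce (lay G μ k u) ⟨v, hv2⟩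
    rw [show ce (lay G μ k u) ⟨u, mem_layer_lay G μ k u⟩ = cB u from rfl]
    rw [show ce (lay G μ k u) ⟨v, hv2⟩ = cB v from stepc v _ hlayeq]
    exact hcol
  have rc : ∀ p : Fin 2 × Fin B, (G.induce (Ukey p)).Coloring (Fin C) := fun p =>
    (hC _ (hUno p)).some
  have memU : ∀ v : V, v ∈ Ukey (key v) := fun v => rfl
  have valid : ∀ {a b : V}, G.Adj a b →
      ((key a, rc (key a) ⟨a, memU a⟩) : (Fin 2 × Fin B) × Fin C)
        ≠ (key b, rc (key b) ⟨b, memU b⟩) := by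
    intro a b hab heq
    have h1 : key a = key b := congrArg Prod.fst heq
    have h2 : rc (key a) ⟨a, memU a⟩ = rc (key b) ⟨b, memU b⟩ := congrArg Prod.snd heq
    have hbmem : b ∈ Ukey (key a) := h1.symm
    have step2 : ∀ (p : Fin 2 × Fin B) (hc : b ∈ Ukey p),
        rc p ⟨b, hc⟩ = rc (key b) ⟨b, memU b⟩ := by
      intro p hc
      have : key b = p := hc
      cases this
      rfl
    have hadj' : (G.induce (Ukey (key a))).Adj ⟨a, memU a⟩ ⟨b, hbmem⟩ := hab
    apply (rc (key a)).valid hadj'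
    rw [step2 (key a) hbmem, ← h2]
  have coloring : G.Coloring ((Fin 2 × Fin B) × Fin C) :=
    SimpleGraph.Coloring.mk (fun v => (key v, rc (key v) ⟨v, memU v⟩)) valid
  have hcard := coloring.colorable
  simpa [mul_assoc] using hcard

end KeyLemmas

end Construction

section Main

variable {V α : Type*} [Fintype V]

/-- induced subgraph of induced subgraph is the induced subgraph on the image. -/
noncomputable def induceInduceIso (G : SimpleGraph V) (W : Set V) (L : Set ↥W) :
    (G.induce W).induce L ≃g G.induce (Subtype.val '' L) where
  toEquiv := Equiv.Set.image Subtype.val L Subtype.val_injective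
  map_rel_iff' := Iff.rfl

lemma main_induction (G : SimpleGraph V) (μ : V → Set α)
    (hmodel : ∀ u v : V, G.Adj u v ↔ SetsOverlap (μ u) (μ v))
    (A : ℕ → ℕ)
    (hclean : ∀ j, 2 ≤ j → j ≤ G.cliqueNum → ∀ W : Set V, CleanOn μ W →
      (G.induce W).cliqueNum ≤ j → (G.induce W).Colorable (A j)) :
    ∀ k, k ≤ G.cliqueNum → ∀ W : Set V, (G.induce W).cliqueNum ≤ k →
      (G.induce W).Colorable (∏ j ∈ Finset.Icc 2 k, 2 * A j) := by
  intro k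
  induction k using Nat.strong_induction_on with
  | _ k IH =>
  intro hkG W hW
  letI : Fintype ↥W := Fintype.ofFinite _
  by_cases hk2 : k < 2
  · have hempty : Finset.Icc 2 k = ∅ := Finset.Icc_eq_empty (by omega)
    rw [hempty, Finset.prod_empty]
    have hnoadj : ∀ a b : ↥W, ¬ (G.induce W).Adj a b := by
      intro a b hab
      have h1 : (G.induce W).IsNClique 1 {b} := SimpleGraph.isNClique_singleton.mpr rfl
      have h2 : (G.induce W).IsNClique 2 (insert a {b}) := by
        have := h1.insert (a := a) (by
          intro c hc
          rw [Finset.mem_singleton] at hc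
          rw [hc]
          exact hab)
        exact this
      have := le_cliqueNum_of_isNClique h2
      omega
    exact ⟨SimpleGraph.Coloring.mk (fun _ => (0 : Fin 1))
      (fun {a b} hab => absurd hab (hnoadj a b))⟩
  · push_neg at hk2
    have hmodel' : ∀ u v : ↥W, (G.induce W).Adj u v ↔
        SetsOverlap ((μ ∘ Subtype.val) u) ((μ ∘ Subtype.val) v) :=
      fun u v => hmodel u.1 v.1
    have hno : ∀ s : Finset ↥W, ¬ (G.induce W).IsNClique (k + 1) s := by
      intro s hs
      have := le_cliqueNum_of_isNClique hs
      omega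
    have hB : ∀ L : Set ↥W, CleanOn (μ ∘ Subtype.val) L →
        ((G.induce W).induce L).Colorable (A k) := by
      intro L hL
      letI : Fintype ↥L := Fintype.ofFinite _
      letI : Fintype ↥(Subtype.val '' L) := Fintype.ofFinite _
      have hclean' : CleanOn μ (Subtype.val '' L) := by
        rintro ⟨x, hx, y, hy, z, hz, hov, hsub⟩
        obtain ⟨x', hx', rfl⟩ := hx
        obtain ⟨y', hy', rfl⟩ := hy
        obtain ⟨z', hz', rfl⟩ := hz
        exact hL ⟨x', hx', y', hy', z', hz', hov, hsub⟩
      have iso := induceInduceIso G W L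
      have hcl : (G.induce (Subtype.val '' L)).cliqueNum ≤ k := by
        have e1 : ((G.induce W).induce L) ↪g (G.induce W) :=
          SimpleGraph.Embedding.induce L
        have := cliqueNum_le_of_embedding (e1.comp iso.symm.toEmbedding)
        omega
      have hcol := hclean k hk2 hkG (Subtype.val '' L) hclean' hcl
      exact colorable_of_hom iso.toHom hcol
    have hC : ∀ U : Set ↥W, (∀ s : Finset ↥U, ¬ ((G.induce W).induce U).IsNClique k s) →
        ((G.induce W).induce U).Colorable (∏ j ∈ Finset.Icc 2 (k - 1), 2 * A j) := by
      intro U hU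
      letI : Fintype ↥U := Fintype.ofFinite _
      letI : Fintype ↥(Subtype.val '' U) := Fintype.ofFinite _
      have iso := induceInduceIso G W U
      have hcl : (G.induce (Subtype.val '' U)).cliqueNum ≤ k - 1 := by
        apply cliqueNum_le_of_forall
        intro s hs
        have hs' := isNClique_map_of_embedding iso.symm.toEmbedding hs
        rw [show k - 1 + 1 = k from by omega] at hs'
        exact hU _ hs'
      have hcol := IH (k - 1) (by omega) (by omega) (Subtype.val '' U) hcl
      exact colorable_of_hom iso.toHom hcol
    have hcolW := aux (G.induce W) (μ ∘ Subtype.val) k hmodel' hk2 hno (A k)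
      (∏ j ∈ Finset.Icc 2 (k - 1), 2 * A j) hB hC
    have hprod : (∏ j ∈ Finset.Icc 2 k, 2 * A j)
        = 2 * A k * (∏ j ∈ Finset.Icc 2 (k - 1), 2 * A j) := by
      have h := Finset.prod_Icc_succ_top (show 2 ≤ (k - 1) + 1 by omega)
        (fun j => 2 * A j)
      rw [show k - 1 + 1 = k from by omega] at h
      rw [h, mul_comm]
    rw [hprod]
    exact hcolW

end Main

end OverlapClean

/-- **Reduction to clean overlap graphs.**  Let `G` be the overlap graph of a finite
family of sets `μ`.  If for every `j` with `2 ≤ j ≤ ω(G)` every clean induced subgraph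
`H` of `G` with `ω(H) ≤ j` satisfies `χ(H) ≤ A j`, then
`χ(G) ≤ ∏_{j=2}^{ω(G)} 2 · A j`. -/
theorem overlap_reduction_to_clean {V α : Type*} [Fintype V]
    (G : SimpleGraph V) (μ : V → Set α)
    (hmodel : ∀ u v : V, G.Adj u v ↔ SetsOverlap (μ u) (μ v))
    (A : ℕ → ℕ)
    (hclean : ∀ j, 2 ≤ j → j ≤ G.cliqueNum → ∀ W : Set V, CleanOn μ W →
      (G.induce W).cliqueNum ≤ j → (G.induce W).Colorable (A j)) :
    G.Colorable (∏ j ∈ Finset.Icc 2 G.cliqueNum, 2 * A j) := by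
  classical
  letI : Fintype ↥(Set.univ : Set V) := Fintype.ofFinite _
  have huniv : (G.induce Set.univ).cliqueNum ≤ G.cliqueNum :=
    OverlapClean.cliqueNum_le_of_embedding (G.induceUnivIso).toEmbedding
  have hmain := OverlapClean.main_induction G μ hmodel A hclean G.cliqueNum le_rfl
    Set.univ huniv
  exact OverlapClean.colorable_of_hom (G.induceUnivIso).symm.toHom hmain
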